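/- Let K be an algebraically closed field containing F_q and let D₀ ∈ GL_n(K). Then there exists Y₀ ∈ GL_n(K) with D₀·φ_q(Y₀) = Y₀, where φ_q(Y₀) is the entry-wise q-th power of Y₀. Moreover, if D₀ has entries in a valuation ring O ⊆ K with D₀ ∈ GL_n(O) and O is integrally closed in K, then any such Y₀ lies in GL_n(O). -/

import Mathlib

open Polynomial Matrix Finset

section LangAux
variable {K : Type*} [Field K] {n : ℕ} {D : Matrix (Fin n) (Fin n) K} {q : ℕ}

/-- The Lang map `v ↦ D ·(v^{(q)})`. -/
noncomputable def langPsi (D : Matrix (Fin n) (Fin n) K) (q : ℕ) : (Fin n → K) → (Fin n → K) :=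
  fun v => D.mulVec (fun i => v i ^ q)

/-- The fixed points of the Lang map. -/
def langFix (D : Matrix (Fin n) (Fin n) K) (q : ℕ) : Set (Fin n → K) :=
  {v | langPsi D q v = v}


lemma langPsi_add (hadd : ∀ x y : K, (x + y) ^ q = x ^ q + y ^ q) (v w : Fin n → K) :
    langPsi D q (v + w) = langPsi D q v + langPsi D q w := by
  have h : (fun i : Fin n => (v + w) i ^ q) = (fun i => v i ^ q) + (fun i => w i ^ q) := by
    funext i; simp [hadd]
  rw [langPsi, langPsi, langPsi, h, Matrix.mulVec_add]

lemma langPsi_smul (c : K) (v : Fin n → K) :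
    langPsi D q (c • v) = c ^ q • langPsi D q v := by
  have h : (fun i : Fin n => (c • v) i ^ q) = c ^ q • (fun i => v i ^ q) := by
    funext i; simp [mul_pow]
  rw [langPsi, langPsi, h, Matrix.mulVec_smul]

lemma langPsi_zero (hq : q ≠ 0) : langPsi D q (0 : Fin n → K) = 0 := by
  have h : (fun i : Fin n => (0 : Fin n → K) i ^ q) = 0 := by
    funext i; simp [zero_pow hq]
  rw [langPsi, h, Matrix.mulVec_zero]

lemma langPsi_sum_smul (hadd : ∀ x y : K, (x + y) ^ q = x ^ q + y ^ q) (hq : q ≠ 0)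
    {ι : Type*} (s : Finset ι) (c : ι → K) (w : ι → Fin n → K) :
    langPsi D q (∑ i ∈ s, c i • w i) = ∑ i ∈ s, (c i) ^ q • langPsi D q (w i) := by
  classical
  induction s using Finset.induction_on with
  | empty => simp [langPsi_zero hq]
  | insert _ _ hx ih =>
      rw [Finset.sum_insert hx, Finset.sum_insert hx, langPsi_add hadd, langPsi_smul, ih]

lemma langPsi_sub (hadd : ∀ x y : K, (x + y) ^ q = x ^ q + y ^ q) (v w : Fin n → K) :
    langPsi D q (v - w) = langPsi D q v - langPsi D q w := by
  have h := langPsi_add (D := D) hadd (v - w) w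
  rw [sub_add_cancel] at h
  rw [h]; abel

lemma pow_q_injective (hadd : ∀ x y : K, (x + y) ^ q = x ^ q + y ^ q) (hq : q ≠ 0)
    {x y : K} (h : x ^ q = y ^ q) : x = y := by
  have hs : (x - y) ^ q = x ^ q - y ^ q := by
    have h2 := hadd (x - y) y
    rw [sub_add_cancel] at h2
    rw [h2]; abel
  have h3 : (x - y) ^ q = 0 := by rw [hs, h, sub_self]
  have h4 := pow_eq_zero_iff hq |>.mp h3
  have := sub_eq_zero.mp h4
  exact this

lemma langPsi_injective (hD : IsUnit D.det)
    (hadd : ∀ x y : K, (x + y) ^ q = x ^ q + y ^ q) (hq : q ≠ 0) :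
    Function.Injective (langPsi D q) := by
  intro x y h
  have hmv : Function.Injective D.mulVec :=
    Matrix.mulVec_injective_iff_isUnit.2 ((Matrix.isUnit_iff_isUnit_det D).mpr hD)
  have h2 : (fun i => x i ^ q) = fun i => y i ^ q := hmv h
  funext i
  exact pow_q_injective hadd hq (congrFun h2 i)


lemma mem_spanFix_of_psi (hD : IsUnit D.det)
    (hadd : ∀ x y : K, (x + y) ^ q = x ^ q + y ^ q) (hq : q ≠ 0)
    (hroot : ∀ a : K, ∃ b : K, b ^ q = a)
    {x : Fin n → K} (hx : langPsi D q x ∈ Submodule.span K (langFix D q)) :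
    x ∈ Submodule.span K (langFix D q) := by
  obtain ⟨N, f, g, hfg⟩ := Submodule.mem_span_set'.mp hx
  choose r hr using fun i : Fin N => hroot (f i)
  have key : langPsi D q (∑ i, r i • (g i : Fin n → K)) = langPsi D q x := by
    rw [langPsi_sum_smul hadd hq]
    rw [← hfg]
    apply Finset.sum_congr rfl
    intro i _
    rw [hr i, (g i).2]
  have hxx : x = ∑ i, r i • (g i : Fin n → K) :=
    (langPsi_injective hD hadd hq key).symm
  rw [hxx]
  exact Submodule.sum_mem _ fun i _ => Submodule.smul_mem _ _ (Submodule.subset_span (g i).2)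

lemma psi_mem_spanFix (hadd : ∀ x y : K, (x + y) ^ q = x ^ q + y ^ q) (hq : q ≠ 0)
    {x : Fin n → K} (hx : x ∈ Submodule.span K (langFix D q)) :
    langPsi D q x ∈ Submodule.span K (langFix D q) := by
  obtain ⟨N, f, g, hfg⟩ := Submodule.mem_span_set'.mp hx
  rw [← hfg, langPsi_sum_smul hadd hq]
  refine Submodule.sum_mem _ fun i _ => Submodule.smul_mem _ _ ?_
  rw [(g i).2.out]
  exact Submodule.subset_span (g i).2


end LangAux

section LangPoly
variable {K : Type*} [Field K]


noncomputable def langPoly (q : ℕ) (b : ℕ → K) : ℕ → K[X]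
  | 0 => C (b 0) * X ^ q
  | (k+1) => (langPoly q b k) ^ q + C (b (k+1)) * X ^ q

lemma langPoly_derivative {q : ℕ} (hqK : (q : K) = 0) (b : ℕ → K) (k : ℕ) :
    derivative (langPoly q b k) = 0 := by
  induction k with
  | zero => simp [langPoly, derivative_C_mul, derivative_X_pow, hqK]
  | succ k ih =>
      simp [langPoly, derivative_pow, ih, derivative_C_mul, derivative_X_pow, hqK]

lemma langPoly_degree {q : ℕ} (hq2 : 2 ≤ q) {b : ℕ → K} (hb0 : b 0 ≠ 0) (k : ℕ) :
    (langPoly q b k).natDegree = q ^ (k + 1) ∧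
      (langPoly q b k).leadingCoeff = b 0 ^ q ^ k := by
  have hq0 : q ≠ 0 := by omega
  induction k with
  | zero =>
      constructor
      · rw [langPoly, natDegree_C_mul_X_pow q (b 0) hb0]; ring
      · rw [langPoly, leadingCoeff_C_mul_X_pow]; ring
  | succ k ih =>
      obtain ⟨hdeg, hlead⟩ := ih
      have hlc : (langPoly q b k).leadingCoeff ^ q ≠ 0 := by
        rw [hlead]
        exact pow_ne_zero _ (pow_ne_zero _ hb0)
      have hdpow : ((langPoly q b k) ^ q).natDegree = q ^ (k + 2) := by
        rw [natDegree_pow' hlc, hdeg]; ring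
      have hlpow : ((langPoly q b k) ^ q).leadingCoeff = b 0 ^ q ^ (k + 1) := by
        rw [leadingCoeff_pow' hlc, hlead, ← pow_mul, ← pow_succ]
      have hlt : (C (b (k+1)) * X ^ q).natDegree < ((langPoly q b k) ^ q).natDegree := by
        rw [hdpow]
        calc (C (b (k+1)) * X ^ q).natDegree ≤ q := natDegree_C_mul_X_pow_le _ _
        _ < q ^ (k + 2) := by
            calc q = q ^ 1 := (pow_one q).symm
            _ < q ^ (k + 2) := Nat.pow_lt_pow_right hq2 (by omega)
      constructor
      · rw [langPoly, natDegree_add_eq_left_of_natDegree_lt hlt, hdpow]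
      · rw [langPoly, leadingCoeff, natDegree_add_eq_left_of_natDegree_lt hlt,
          coeff_add_eq_left_of_lt hlt, ← leadingCoeff, hlpow]

/-- Existence of a nonzero solution `t` of the key additive polynomial equation. -/

lemma exists_lang_root [IsAlgClosed K] {q : ℕ} (hq2 : 2 ≤ q) (hqK : (q : K) = 0)
    (M : ℕ) (b : ℕ → K) (hb0 : b 0 ≠ 0) :
    ∃ t : K, t ≠ 0 ∧ ∃ a : ℕ → K, a 0 = b 0 * t ^ q ∧
      (∀ i, a (i + 1) = a i ^ q + b (i + 1) * t ^ q) ∧ a M = t := by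
  set F : K[X] := langPoly q b M - X with hF
  have hdeg : (langPoly q b M).natDegree = q ^ (M + 1) := (langPoly_degree hq2 hb0 M).1
  have hX : (X : K[X]).natDegree < (langPoly q b M).natDegree := by
    rw [natDegree_X, hdeg]
    calc 1 < q := hq2
    _ = q ^ 1 := (pow_one q).symm
    _ ≤ q ^ (M + 1) := Nat.pow_le_pow_right (by omega) (by omega)
  have hFdeg : F.natDegree = q ^ (M + 1) := by
    rw [hF, natDegree_sub_eq_left_of_natDegree_lt hX, hdeg]
  have hFdeg2 : 2 ≤ F.natDegree := by
    rw [hFdeg]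
    calc 2 ≤ q := hq2
    _ = q ^ 1 := (pow_one q).symm
    _ ≤ q ^ (M + 1) := Nat.pow_le_pow_right (by omega) (by omega)
  have hFne : F ≠ 0 := fun h => by simp [h] at hFdeg2
  have hFder : derivative F = -1 := by
    rw [hF, derivative_sub, langPoly_derivative hqK, derivative_X, zero_sub]
  have hsep : F.Separable := by
    rw [Polynomial.Separable, hFder]
    exact ⟨0, -1, by ring⟩
  have hcard : Fintype.card (F.rootSet K) = F.natDegree :=
    card_rootSet_eq_natDegree hsep (IsAlgClosed.splits_domain F)
  -- find a nonzero root
  have : ∃ t : K, t ≠ 0 ∧ F.eval t = 0 := by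
    by_contra hcon
    push_neg at hcon
    have hsub : ∀ x : F.rootSet K, (x : K) = 0 := by
      rintro ⟨x, hx⟩
      rw [mem_rootSet] at hx
      show x = 0
      by_contra hxne
      exact hcon x hxne (by simpa using hx.2)
    have : Fintype.card (F.rootSet K) ≤ 1 := by
      apply Fintype.card_le_one_iff.2
      rintro a b
      ext
      rw [hsub a, hsub b]
    omega
  obtain ⟨t, ht0, htF⟩ := this
  refine ⟨t, ht0, fun i => (langPoly q b i).eval t, ?_, ?_, ?_⟩
  · simp [langPoly]
  · intro i; simp [langPoly]
  · have : (langPoly q b M).eval t - t = 0 := by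
      have := htF
      rw [hF] at this
      simpa using this
    exact sub_eq_zero.mp this


end LangPoly

section LangMain
variable {K : Type*} [Field K] {n : ℕ} {D : Matrix (Fin n) (Fin n) K} {q : ℕ}


lemma exists_good_vector [IsAlgClosed K] (hq2 : 2 ≤ q) (hqK : ((q : ℕ) : K) = 0)
    (hadd : ∀ x y : K, (x + y) ^ q = x ^ q + y ^ q)
    (hroot : ∀ a : K, ∃ b : K, b ^ q = a)
    (W : Submodule K (Fin n → K))
    (hW1 : ∀ x, langPsi D q x ∈ W → x ∈ W)
    (u : Fin n → K) (hu : u ∉ W) :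
    ∃ v, v ∉ W ∧ ∃ y ∈ W, langPsi D q v = v + y := by
  classical
  have hq0 : q ≠ 0 := by omega
  set w : ℕ → (Fin n → K) := fun i => (langPsi D q)^[i] u with hwdef
  have hw : ∀ i, langPsi D q (w i) = w (i + 1) := fun i =>
    (Function.iterate_succ_apply' (langPsi D q) i u).symm
  set S : ℕ → Prop := fun m =>
    ∃ y ∈ W, ∃ b : ℕ → K, w m = y + ∑ i ∈ Finset.range m, b i • w i with hSdef
  -- S is nonempty
  have hS : ∃ m, S m := by
    by_contra hcon
    push_neg at hcon
    set U : ℕ → Submodule K (Fin n → K) := fun k =>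
      W ⊔ Submodule.span K (Set.range fun i : Fin k => w i) with hUdef
    have hwk : ∀ k, w k ∉ U k := by
      intro k hk
      obtain ⟨y, hy, z, hz, hyz⟩ := Submodule.mem_sup.mp hk
      obtain ⟨c, hc⟩ := (Submodule.mem_span_range_iff_exists_fun K).mp hz
      refine hcon k ⟨y, hy, fun i => if h : i < k then c ⟨i, h⟩ else 0, ?_⟩
      rw [← hyz]
      congr 1
      rw [Finset.sum_range fun i => (if h : i < k then c ⟨i, h⟩ else 0) • w i]
      rw [← hc]
      exact Finset.sum_congr rfl fun i _ => by simp [i.isLt]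
    have hmono : ∀ k, U k < U (k + 1) := by
      intro k
      have hle : U k ≤ U (k + 1) := by
        apply sup_le_sup_left
        apply Submodule.span_mono
        rintro x ⟨i, rfl⟩
        exact ⟨⟨i.1, by omega⟩, rfl⟩
      have hmem : w k ∈ U (k + 1) :=
        le_sup_right (α := Submodule K (Fin n → K))
          (Submodule.subset_span ⟨⟨k, by omega⟩, rfl⟩)
      exact lt_of_le_of_ne hle fun h => hwk k (h ▸ hmem)
    have hrank : ∀ k, k ≤ Module.finrank K (U k) := by
      intro k
      induction k with
      | zero => omega
      | succ k ih =>
          have := Submodule.finrank_lt_finrank_of_lt (hmono k)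
          omega
    have h1 := hrank (n + 1)
    have h2 : Module.finrank K (U (n + 1)) ≤ Module.finrank K (Fin n → K) :=
      Submodule.finrank_le _
    have h3 : Module.finrank K (Fin n → K) = n := by
      rw [Module.finrank_pi]
      simp
    omega
  set m := Nat.find hS with hmdef
  have hm : S m := Nat.find_spec hS
  have hmin : ∀ k, k < m → ¬ S k := fun k hk => Nat.find_min hS hk
  obtain ⟨y, hy, b, hrel⟩ := hm
  have hm1 : 1 ≤ m := by
    rcases Nat.eq_zero_or_pos m with h0 | h1
    · exfalso
      rw [h0] at hrel
      simp only [Finset.range_zero, Finset.sum_empty, add_zero] at hrel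
      have : w 0 = u := rfl
      rw [this] at hrel
      exact hu (hrel ▸ hy)
    · exact h1
  obtain ⟨M, hMm⟩ : ∃ M, m = M + 1 := ⟨m - 1, by omega⟩
  -- b 0 ≠ 0
  have hb0 : b 0 ≠ 0 := by
    intro hb00
    choose c hc using fun i : ℕ => hroot (b (i + 1))
    have hsplit : ∑ i ∈ Finset.range m, b i • w i
        = ∑ i ∈ Finset.range M, b (i + 1) • w (i + 1) := by
      rw [hMm, Finset.sum_range_succ']
      simp [hb00]
    have hpsi : langPsi D q (w M - ∑ i ∈ Finset.range M, c i • w i) = y := by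
      rw [langPsi_sub hadd, langPsi_sum_smul hadd hq0, hw M]
      have : ∑ i ∈ Finset.range M, c i ^ q • langPsi D q (w i)
          = ∑ i ∈ Finset.range M, b (i + 1) • w (i + 1) :=
        Finset.sum_congr rfl fun i _ => by rw [hc, hw]
      rw [this, ← hMm]
      rw [hrel, hsplit]
      abel
    have hWmem : w M - ∑ i ∈ Finset.range M, c i • w i ∈ W := hW1 _ (hpsi ▸ hy)
    refine hmin M (by omega) ⟨_, hWmem, c, ?_⟩
    abel
  -- get the root
  obtain ⟨t, ht0, a, ha0, harec, haM⟩ := exists_lang_root hq2 hqK M b hb0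
  set v : Fin n → K := ∑ i ∈ Finset.range (M + 1), a i • w i with hvdef
  have hrel' : w (M + 1) = y + ∑ i ∈ Finset.range (M + 1), b i • w i := hMm ▸ hrel
  -- the key computation
  have hkey : langPsi D q v = v + t ^ q • y := by
    have e1 : langPsi D q v = ∑ i ∈ Finset.range (M + 1), (a i) ^ q • w (i + 1) := by
      rw [hvdef, langPsi_sum_smul hadd hq0]
      exact Finset.sum_congr rfl fun i _ => by rw [hw]
    have e2 : ∑ i ∈ Finset.range (M + 1), (a i) ^ q • w (i + 1)
        = (∑ i ∈ Finset.range M, (a (i + 1) - b (i + 1) * t ^ q) • w (i + 1))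
          + t ^ q • w (M + 1) := by
      rw [Finset.sum_range_succ]
      congr 1
      · exact Finset.sum_congr rfl fun i _ => by rw [harec i]; congr 1; ring
      · rw [haM]
    have e3 : ∑ i ∈ Finset.range M, (a (i + 1) - b (i + 1) * t ^ q) • w (i + 1)
        = (∑ i ∈ Finset.range M, a (i + 1) • w (i + 1))
          - ∑ i ∈ Finset.range M, (b (i + 1) * t ^ q) • w (i + 1) := by
      rw [← Finset.sum_sub_distrib]
      exact Finset.sum_congr rfl fun i _ => sub_smul _ _ _
    have e4 : ∑ i ∈ Finset.range M, a (i + 1) • w (i + 1) = v - a 0 • w 0 := by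
      have := Finset.sum_range_succ' (fun i => a i • w i) M
      rw [hvdef]
      rw [this]
      abel
    have e5 : ∑ i ∈ Finset.range M, (b (i + 1) * t ^ q) • w (i + 1)
        = (∑ i ∈ Finset.range (M + 1), (b i * t ^ q) • w i) - (b 0 * t ^ q) • w 0 := by
      have := Finset.sum_range_succ' (fun i => (b i * t ^ q) • w i) M
      rw [this]
      abel
    have e6 : t ^ q • w (M + 1) = t ^ q • y
        + ∑ i ∈ Finset.range (M + 1), (b i * t ^ q) • w i := by
      rw [hrel', smul_add, Finset.smul_sum]
      congr 1
      exact Finset.sum_congr rfl fun i _ => by rw [smul_smul, mul_comm (t ^ q)]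
    rw [e1, e2, e3, e4, e5, e6, ha0]
    abel
  -- v ∉ W
  have hv : v ∉ W := by
    intro hvW
    have hsum : v = (∑ i ∈ Finset.range M, a i • w i) + t • w M := by
      rw [hvdef, Finset.sum_range_succ, haM]
    refine hmin M (by omega) ⟨t⁻¹ • v, Submodule.smul_mem _ _ hvW,
      fun i => -(t⁻¹ * a i), ?_⟩
    have hM : t • w M = v - ∑ i ∈ Finset.range M, a i • w i := by rw [hsum]; abel
    have hneg : ∑ i ∈ Finset.range M, (-(t⁻¹ * a i)) • w i
        = -∑ i ∈ Finset.range M, (t⁻¹ * a i) • w i := by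
      rw [← Finset.sum_neg_distrib]
      exact Finset.sum_congr rfl fun i _ => neg_smul _ _
    calc w M = t⁻¹ • (t • w M) := by
            rw [smul_smul, inv_mul_cancel₀ ht0, one_smul]
      _ = t⁻¹ • v - ∑ i ∈ Finset.range M, (t⁻¹ * a i) • w i := by
            rw [hM, smul_sub]
            congr 1
            rw [Finset.smul_sum]
            exact Finset.sum_congr rfl fun i _ => smul_smul _ _ _
      _ = t⁻¹ • v + ∑ i ∈ Finset.range M, (fun i => -(t⁻¹ * a i)) i • w i := by
            show t⁻¹ • v - ∑ i ∈ Finset.range M, (t⁻¹ * a i) • w i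
              = t⁻¹ • v + ∑ i ∈ Finset.range M, (-(t⁻¹ * a i)) • w i
            rw [hneg, sub_eq_add_neg]
  exact ⟨v, hv, t ^ q • y, Submodule.smul_mem _ _ hy, hkey⟩


lemma span_langFix_eq_top [IsAlgClosed K] (hD : IsUnit D.det)
    (hq2 : 2 ≤ q) (hqK : ((q : ℕ) : K) = 0)
    (hadd : ∀ x y : K, (x + y) ^ q = x ^ q + y ^ q)
    (hroot : ∀ a : K, ∃ b : K, b ^ q = a)
    (hAS : ∀ c : K, ∃ d : K, d = d ^ q + c) :
    Submodule.span K (langFix D q) = ⊤ := by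
  have hq0 : q ≠ 0 := by omega
  by_contra hne
  have hex : ∃ u, u ∉ Submodule.span K (langFix D q) := by
    by_contra h
    push_neg at h
    exact hne (Submodule.eq_top_iff'.mpr h)
  obtain ⟨u, hu⟩ := hex
  obtain ⟨v, hv, y, hy, hkey⟩ := exists_good_vector hq2 hqK hadd hroot
    (Submodule.span K (langFix D q)) (fun x hx => mem_spanFix_of_psi hD hadd hq0 hroot hx) u hu
  obtain ⟨N, f, g, hfg⟩ := Submodule.mem_span_set'.mp hy
  choose d hd using fun i : Fin N => hAS (f i)
  set v' : Fin n → K := v + ∑ i, d i • (g i : Fin n → K) with hv'def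
  have hfix : langPsi D q v' = v' := by
    rw [hv'def, langPsi_add hadd, langPsi_sum_smul hadd hq0, hkey]
    have h1 : ∑ i, (d i) ^ q • langPsi D q (g i : Fin n → K)
        = ∑ i, (d i) ^ q • (g i : Fin n → K) :=
      Finset.sum_congr rfl fun i _ => by rw [(g i).2.out]
    rw [h1, ← hfg]
    have h2 : (∑ i, f i • (g i : Fin n → K)) + ∑ i, (d i) ^ q • (g i : Fin n → K)
        = ∑ i, d i • (g i : Fin n → K) := by
      rw [← Finset.sum_add_distrib]
      exact Finset.sum_congr rfl fun i _ => by
        rw [← add_smul]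
        congr 1
        conv_rhs => rw [hd i]
        ring
    rw [add_assoc, h2]
  have hv'W : v' ∈ Submodule.span K (langFix D q) := Submodule.subset_span hfix
  have hsumW : ∑ i, d i • (g i : Fin n → K) ∈ Submodule.span K (langFix D q) :=
    Submodule.sum_mem _ fun i _ => Submodule.smul_mem _ _ (Submodule.subset_span (g i).2)
  have : v ∈ Submodule.span K (langFix D q) := by
    have : v = v' - ∑ i, d i • (g i : Fin n → K) := by rw [hv'def]; abel
    rw [this]
    exact Submodule.sub_mem _ hv'W hsumW
  exact hv this

lemma exists_lang_matrix [IsAlgClosed K] (hD : IsUnit D.det)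
    (hq2 : 2 ≤ q) (hqK : ((q : ℕ) : K) = 0)
    (hadd : ∀ x y : K, (x + y) ^ q = x ^ q + y ^ q)
    (hroot : ∀ a : K, ∃ b : K, b ^ q = a)
    (hAS : ∀ c : K, ∃ d : K, d = d ^ q + c) :
    ∃ Y : Matrix (Fin n) (Fin n) K, IsUnit Y.det ∧ D * Y.map (fun x => x ^ q) = Y := by
  obtain ⟨b, hbsub, hbspan, hbind⟩ := exists_linearIndependent K (langFix D q)
  rw [span_langFix_eq_top hD hq2 hqK hadd hroot hAS] at hbspan
  have hbtop : ⊤ ≤ Submodule.span K (Set.range ((↑) : b → (Fin n → K))) := by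
    rw [Subtype.range_coe, hbspan]
  let β₀ : Module.Basis b K (Fin n → K) := Module.Basis.mk hbind hbtop
  let e : b ≃ Fin n := β₀.indexEquiv (Pi.basisFun K (Fin n))
  let β : Module.Basis (Fin n) K (Fin n → K) := β₀.reindex e
  have hβfix : ∀ j, (β j) ∈ langFix D q := by
    intro j
    have : β j = β₀ (e.symm j) := by rw [Module.Basis.reindex_apply]
    rw [this]
    have : β₀ (e.symm j) = ((e.symm j : b) : Fin n → K) := Module.Basis.mk_apply hbind hbtop _
    rw [this]
    exact hbsub (e.symm j).2
  refine ⟨Matrix.of fun i j => β j i, ?_, ?_⟩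
  · have hY : (Matrix.of fun i j => β j i) = (Pi.basisFun K (Fin n)).toMatrix ⇑β := by
      ext i j
      rw [Module.Basis.toMatrix_apply, Pi.basisFun_repr, Matrix.of_apply]
    refine IsUnit.of_mul_eq_one (β.toMatrix ⇑(Pi.basisFun K (Fin n))).det ?_
    rw [hY, ← Matrix.det_mul, Module.Basis.toMatrix_mul_toMatrix_flip, Matrix.det_one]
  · ext i j
    have h1 := congrFun (hβfix j) i
    simp only [langPsi, Matrix.mulVec, dotProduct] at h1
    simp only [Matrix.mul_apply, Matrix.map_apply, Matrix.of_apply]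
    exact h1


end LangMain

section LangInt
variable {K : Type*} [Field K]


lemma exists_min_div (O : Subring K) (hVR : ∀ x : K, x ≠ 0 → x ∈ O ∨ x⁻¹ ∈ O)
    (s : Finset K) (h0 : (0 : K) ∉ s) (hs : s.Nonempty) :
    ∃ y ∈ s, ∀ x ∈ s, x / y ∈ O := by
  classical
  induction s using Finset.induction_on with
  | empty => exact absurd hs (by simp)
  | @insert a s' ha ih =>
      have ha0 : a ≠ 0 := fun h => h0 (h ▸ Finset.mem_insert_self a s')
      rcases s'.eq_empty_or_nonempty with h' | h'
      · subst h'
        refine ⟨a, Finset.mem_insert_self a _, fun x hx => ?_⟩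
        rcases Finset.mem_insert.mp hx with rfl | hx'
        · rw [div_self ha0]; exact one_mem O
        · exact absurd hx' (by simp)
      · obtain ⟨y, hys, hy⟩ := ih (fun h => h0 (Finset.mem_insert_of_mem h)) h'
        have hy0 : y ≠ 0 := fun h => h0 (Finset.mem_insert_of_mem (h ▸ hys))
        rcases hVR (a / y) (div_ne_zero ha0 hy0) with h | h
        · refine ⟨y, Finset.mem_insert_of_mem hys, fun x hx => ?_⟩
          rcases Finset.mem_insert.mp hx with rfl | hx'
          · exact h
          · exact hy x hx'
        · rw [inv_div] at h
          refine ⟨a, Finset.mem_insert_self a _, fun x hx => ?_⟩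
          rcases Finset.mem_insert.mp hx with rfl | hx'
          · rw [div_self ha0]; exact one_mem O
          · have hxa : x / y * (y / a) = x / a := by
              rw [div_mul_div_comm, mul_comm x y, mul_div_mul_left _ _ hy0]
            exact hxa ▸ mul_mem (hy x hx') h

lemma lang_integral {n : ℕ} (q : ℕ) (hq2 : 2 ≤ q)
    (φ : K →+* K) (hφ : ∀ x : K, φ x = x ^ q)
    (O : Subring K)
    (hVR : ∀ x : K, x ≠ 0 → x ∈ O ∨ x⁻¹ ∈ O)
    (hIC : ∀ x : K, IsIntegral O x → x ∈ O)
    (D : Matrix (Fin n) (Fin n) K) (hD : IsUnit D.det)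
    (hDO : ∀ i j, D i j ∈ O) (hDO' : ∀ i j, D⁻¹ i j ∈ O)
    (Y : Matrix (Fin n) (Fin n) K) (hYdet : IsUnit Y.det)
    (hYeq : D * Y.map (fun x => x ^ q) = Y) :
    (∀ i j, Y i j ∈ O) ∧ (∀ i j, Y⁻¹ i j ∈ O) := by
  classical
  rcases Nat.eq_zero_or_pos n with hn | hn
  · subst hn
    exact ⟨fun i => i.elim0, fun i => i.elim0⟩
  haveI : Nonempty (Fin n) := ⟨⟨0, hn⟩⟩
  have hq1 : q - 1 ≠ 0 := by omega
  have hqsplit : q - 1 + 1 = q := by omega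
  have hdne : Y.det ≠ 0 := hYdet.ne_zero
  -- there is a nonzero entry
  have hY0 : ∃ i j, Y i j ≠ 0 := by
    by_contra h
    push_neg at h
    have hz : Y = 0 := by ext i j; exact h i j
    rw [hz, Matrix.det_zero] at hdne
    exact hdne rfl
  obtain ⟨i1, j1, hij⟩ := hY0
  set s : Finset K :=
    (Finset.univ.image fun ij : Fin n × Fin n => Y ij.1 ij.2).filter (fun x => x ≠ 0) with hsdef
  have hs0 : (0 : K) ∉ s := by simp [hsdef]
  have hsne : s.Nonempty :=
    ⟨Y i1 j1, Finset.mem_filter.mpr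
      ⟨Finset.mem_image.mpr ⟨(i1, j1), Finset.mem_univ _, rfl⟩, hij⟩⟩
  obtain ⟨y, hys, hymin⟩ := exists_min_div O hVR s hs0 hsne
  have hy0 : y ≠ 0 := fun h => hs0 (h ▸ hys)
  obtain ⟨⟨i0, j0⟩, -, hyeq⟩ := Finset.mem_image.mp (Finset.mem_filter.mp hys).1
  have hdiv : ∀ k l, Y k l / y ∈ O := by
    intro k l
    by_cases h : Y k l = 0
    · rw [h, zero_div]; exact zero_mem O
    · exact hymin _ (Finset.mem_filter.mpr
        ⟨Finset.mem_image.mpr ⟨(k, l), Finset.mem_univ _, rfl⟩, h⟩)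
  have hinvY : D⁻¹ * Y = Y.map (fun x => x ^ q) := by
    calc D⁻¹ * Y = D⁻¹ * (D * Y.map (fun x => x ^ q)) := by rw [hYeq]
    _ = Y.map (fun x => x ^ q) := by
        rw [← Matrix.mul_assoc, Matrix.nonsing_inv_mul D hD, Matrix.one_mul]
  have hentry : y ^ q = ∑ k, D⁻¹ i0 k * Y k j0 := by
    have h2 : (D⁻¹ * Y) i0 j0 = (Y.map fun x => x ^ q) i0 j0 := by rw [hinvY]
    rw [Matrix.map_apply, Matrix.mul_apply, hyeq] at h2
    exact h2.symm
  have hsO : ∑ k, D⁻¹ i0 k * (Y k j0 / y) ∈ O :=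
    sum_mem fun k _ => mul_mem (hDO' _ _) (hdiv _ _)
  have hpow : y ^ (q - 1) = ∑ k, D⁻¹ i0 k * (Y k j0 / y) := by
    have h1 : y ^ q = (∑ k, D⁻¹ i0 k * (Y k j0 / y)) * y := by
      rw [hentry, Finset.sum_mul]
      exact Finset.sum_congr rfl fun k _ => by
        rw [mul_assoc, div_mul_cancel₀ _ hy0]
    have h2 : y ^ (q - 1) * y = (∑ k, D⁻¹ i0 k * (Y k j0 / y)) * y := by
      rw [← h1, ← pow_succ, hqsplit]
    exact mul_right_cancel₀ hy0 h2
  have hyint : IsIntegral O y := by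
    refine ⟨X ^ (q - 1) - C (⟨_, hsO⟩ : O), monic_X_pow_sub_C _ hq1, ?_⟩
    rw [eval₂_sub, eval₂_X_pow, eval₂_C]
    exact sub_eq_zero.mpr hpow
  have hyO : y ∈ O := hIC y hyint
  have hYO : ∀ i j, Y i j ∈ O := by
    intro i j
    have h := mul_mem (hdiv i j) hyO
    rwa [div_mul_cancel₀ _ hy0] at h
  refine ⟨hYO, ?_⟩
  -- now the inverse
  set N : Matrix (Fin n) (Fin n) O := Matrix.of fun i j => (⟨Y i j, hYO i j⟩ : O) with hNdef
  have hNY : O.subtype.mapMatrix N = Y := by ext i j; rfl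
  have hdetO : Y.det ∈ O := by
    rw [← hNY, ← RingHom.map_det]
    exact SetLike.coe_mem _
  set M0 : Matrix (Fin n) (Fin n) O := Matrix.of fun i j => (⟨D i j, hDO i j⟩ : O) with hM0def
  have hM0D : O.subtype.mapMatrix M0 = D := by ext i j; rfl
  have hDdetO : D.det ∈ O := by
    rw [← hM0D, ← RingHom.map_det]
    exact SetLike.coe_mem _
  have hdd : Y.det = D.det * Y.det ^ q := by
    have h := congrArg Matrix.det hYeq
    rw [Matrix.det_mul] at h
    have hmap : Y.map (fun x => x ^ q) = φ.mapMatrix Y := by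
      ext i j; rw [Matrix.map_apply, RingHom.mapMatrix_apply, Matrix.map_apply, hφ]
    rw [hmap, ← RingHom.map_det, hφ] at h
    exact h.symm
  have h1 : D.det * Y.det ^ (q - 1) = 1 := by
    have h2 : (1 : K) * Y.det = (D.det * Y.det ^ (q - 1)) * Y.det := by
      rw [one_mul, mul_assoc, ← pow_succ, hqsplit, ← hdd]
    exact (mul_right_cancel₀ hdne h2).symm
  have hinvpow : (Y.det⁻¹) ^ (q - 1) = D.det := by
    have h1' : Y.det ^ (q - 1) * D.det = 1 := by rw [mul_comm]; exact h1
    rw [inv_pow, eq_comm]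
    exact eq_inv_of_mul_eq_one_right h1'
  have hintinv : IsIntegral O (Y.det⁻¹) := by
    refine ⟨X ^ (q - 1) - C (⟨_, hDdetO⟩ : O), monic_X_pow_sub_C _ hq1, ?_⟩
    rw [eval₂_sub, eval₂_X_pow, eval₂_C]
    exact sub_eq_zero.mpr hinvpow
  have hdinvO : Y.det⁻¹ ∈ O := hIC _ hintinv
  have hadjO : ∀ i j, Y.adjugate i j ∈ O := by
    intro i j
    rw [← hNY, ← RingHom.map_adjugate]
    exact SetLike.coe_mem _
  intro i j
  rw [Matrix.inv_def, Ring.inverse_eq_inv, Matrix.smul_apply, smul_eq_mul]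
  exact mul_mem hdinvO (hadjO i j)


end LangInt


/-- Lang isogeny for `GL_n` plus integrality.  Let `K` be an algebraically closed
field containing `F_q` (`q = p^e`) and `D₀ ∈ GL_n(K)`.  Then there exists `Y₀ ∈ GL_n(K)` with
`D₀·φ_q(Y₀) = Y₀` (entry-wise `q`-th powers).  Moreover, if `O ⊆ K` is a valuation ring that is
integrally closed in `K` and `D₀ ∈ GL_n(O)`, then every such `Y₀` lies in `GL_n(O)`. -/
theorem stmt3 {K : Type*} [Field K] [IsAlgClosed K]
    (p e : ℕ) [Fact p.Prime] [CharP K p] (he : e ≠ 0) {n : ℕ}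
    (D₀ : Matrix (Fin n) (Fin n) K) (hD : IsUnit D₀.det)
    (O : Subring K)
    (hVR : ∀ x : K, x ≠ 0 → x ∈ O ∨ x⁻¹ ∈ O)
    (hIC : ∀ x : K, IsIntegral O x → x ∈ O) :
    (∃ Y : Matrix (Fin n) (Fin n) K, IsUnit Y.det ∧ D₀ * Y.map (fun x => x ^ p ^ e) = Y) ∧
    ((∀ i j, D₀ i j ∈ O) → (∀ i j, D₀⁻¹ i j ∈ O) →
      ∀ Y : Matrix (Fin n) (Fin n) K, IsUnit Y.det → D₀ * Y.map (fun x => x ^ p ^ e) = Y →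
        (∀ i j, Y i j ∈ O) ∧ (∀ i j, Y⁻¹ i j ∈ O)) := by
  have hq2 : 2 ≤ p ^ e := Nat.one_lt_pow he (Fact.out : p.Prime).one_lt
  have hq0 : p ^ e ≠ 0 := by omega
  have hqK : ((p ^ e : ℕ) : K) = 0 := by
    push_cast
    rw [CharP.cast_eq_zero K p]
    exact zero_pow he
  have hadd : ∀ x y : K, (x + y) ^ p ^ e = x ^ p ^ e + y ^ p ^ e := fun x y =>
    add_pow_char_pow x y p e
  have hroot : ∀ a : K, ∃ b : K, b ^ p ^ e = a := fun a =>
    IsAlgClosed.exists_pow_nat_eq a (by omega)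
  have hAS : ∀ c : K, ∃ d : K, d = d ^ p ^ e + c := by
    intro c
    set G : K[X] := X ^ p ^ e + (C c - X) with hGdef
    have hd1 : (C c - X : K[X]).natDegree < (X ^ p ^ e : K[X]).natDegree := by
      rw [natDegree_X_pow]
      have h := natDegree_sub_le (C c) (X : K[X])
      rw [natDegree_C, natDegree_X] at h
      omega
    have hGdeg : G.natDegree = p ^ e := by
      rw [hGdef, natDegree_add_eq_left_of_natDegree_lt hd1, natDegree_X_pow]
    have hGne : G.degree ≠ 0 := by
      have hpos : 0 < G.natDegree := by omega
      exact ne_of_gt (natDegree_pos_iff_degree_pos.mp hpos)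
    obtain ⟨z, hz⟩ := IsAlgClosed.exists_root G hGne
    refine ⟨z, ?_⟩
    have hzz : z ^ p ^ e + (c - z) = 0 := by
      have h := hz
      rw [IsRoot.def, hGdef] at h
      simpa using h
    linear_combination -hzz
  constructor
  · exact exists_lang_matrix hD hq2 hqK hadd hroot hAS
  · intro hDO hDO' Y hYdet hYeq
    let φ : K →+* K :=
      { toFun := fun x => x ^ p ^ e
        map_one' := one_pow _
        map_mul' := fun x y => mul_pow x y _
        map_zero' := zero_pow hq0
        map_add' := fun x y => hadd x y }
    exact lang_integral (p ^ e) hq2 φ (fun x => rfl) O hVR hIC D₀ hD hDO hDO' Y hYdet hYeq
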